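/- Let P be a poset and 𝒳 a semi-trim P-partition of an ω-Stone space W. Then: (A) 𝒳 can be regularly extended to a complete semi-trim P-partition of W if and only if every ascending sequence of elements of P̂ has a supremum in P; (B) 𝒳 can be regularly extended to a complete trim P-partition of W if and only if P satisfies the ascending chain condition. -/
import Mathlib

open Set

set_option linter.unusedSectionVars false
variable {P W : Type*} [PartialOrder P] [TopologicalSpace W]

/-- The type of a subset `Y` with respect to the family `X`. -/
def ptype (X : P → Set W) (Y : Set W) : Set P :=
  {p | (Y ∩ X p).Nonempty}

/-- `A` is a `p`-trim set: a compact open set whose type is exactly `{q | p ≤ q}`. -/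
def IsTrimSet (X : P → Set W) (p : P) (A : Set W) : Prop :=
  IsCompact A ∧ IsOpen A ∧ ptype X A = Ici p

/-- `P̂`: the set of labels `p` for which a `p`-trim set exists. -/
def trimHat (X : P → Set W) : Set P :=
  {p | ∃ A, IsTrimSet X p A}

/-- A `P`-partition: a pairwise disjoint family of nonempty subsets. -/
structure IsPPartition (X : P → Set W) : Prop where
  nonempty : ∀ p, (X p).Nonempty
  pairwise_disjoint : Pairwise fun p q => Disjoint (X p) (X q)

/-- A semi-trim `P`-partition. -/
structure IsSemiTrim (X : P → Set W) extends IsPPartition X : Prop where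
  nhds_base : ∀ w : W, ∀ U ∈ nhds w, ∃ p A, IsTrimSet X p A ∧ w ∈ A ∧ A ⊆ U
  trim_dense : ∀ A : Set W, IsOpen A → ∀ p ∈ ptype X A ∩ trimHat X,
    ∃ B ⊆ A, IsTrimSet X p B
  label_sup : ∀ p, ∀ x ∈ X p, IsLUB {q | ∃ A, IsTrimSet X q A ∧ x ∈ A} p
  full : ∀ p : P, ∀ w : W,
    (∀ U ∈ nhds w, ∃ A, IsTrimSet X p A ∧ w ∈ A ∧ A ⊆ U) → w ∈ X p

/- ### Auxiliary material -/

/-- Generic dependent recursion producing a sequence with invariants. -/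
lemma seq_rec {α : Type*} (Q : ℕ → α → Prop) (R : ℕ → α → α → Prop) (a0 : α) (h0 : Q 0 a0)
    (step : ∀ n a, Q n a → ∃ b, Q (n + 1) b ∧ R n a b) :
    ∃ f : ℕ → α, f 0 = a0 ∧ (∀ n, Q n (f n)) ∧ ∀ n, R n (f n) (f (n + 1)) := by
  choose g hg1 hg2 using step
  let f : ∀ n : ℕ, {a : α // Q n a} :=
    fun n => Nat.rec ⟨a0, h0⟩ (fun n p => ⟨g n p.1 p.2, hg1 n p.1 p.2⟩) n
  exact ⟨fun n => (f n).1, rfl, fun n => (f n).2, fun n => hg2 n (f n).1 (f n).2⟩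

lemma ptype_mono {X : P → Set W} {A B : Set W} (h : B ⊆ A) : ptype X B ⊆ ptype X A :=
  fun _ ⟨x, hx1, hx2⟩ => ⟨x, h hx1, hx2⟩

lemma trim_mem {X : P → Set W} {p : P} {A : Set W} (h : IsTrimSet X p A) : p ∈ ptype X A := by
  rw [h.2.2]; exact self_mem_Ici

/-- A trim set w.r.t. `X` remains trim w.r.t. any regular extension. -/
lemma ext_trim {X Y : P → Set W} (hXY : ∀ p, X p ⊆ Y p)
    (hreg : ∀ (A : Set W) (p q : P), IsTrimSet X p A → (A ∩ Y q).Nonempty → p ≤ q)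
    {p : P} {A : Set W} (h : IsTrimSet X p A) : IsTrimSet Y p A := by
  refine ⟨h.1, h.2.1, subset_antisymm (fun q hq => hreg A p q h hq) (fun q hq => ?_)⟩
  have : q ∈ ptype X A := by rw [h.2.2]; exact hq
  exact ⟨this.choose, this.choose_spec.1, hXY q this.choose_spec.2⟩

/-- The set of labels of trim sets containing `w`. -/
def Dset (X : P → Set W) (w : W) : Set P := {q | ∃ A, IsTrimSet X q A ∧ w ∈ A}

/-- The canonical completion of a semi-trim partition. -/
def Yext (X : P → Set W) : P → Set W := fun p => {w | IsLUB (Dset X w) p}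

lemma Dset_nonempty {X : P → Set W} (hX : IsSemiTrim X) (w : W) : (Dset X w).Nonempty := by
  obtain ⟨p, A, hA, hwA, -⟩ := hX.nhds_base w univ Filter.univ_mem
  exact ⟨p, A, hA, hwA⟩

lemma Dset_directed {X : P → Set W} (hX : IsSemiTrim X) (w : W) {r s : P}
    (hr : r ∈ Dset X w) (hs : s ∈ Dset X w) : ∃ t ∈ Dset X w, r ≤ t ∧ s ≤ t := by
  obtain ⟨A, hA, hwA⟩ := hr
  obtain ⟨B, hB, hwB⟩ := hs
  have hAB : A ∩ B ∈ nhds w := (hA.2.1.inter hB.2.1).mem_nhds ⟨hwA, hwB⟩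
  obtain ⟨u, C, hC, hwC, hsub⟩ := hX.nhds_base w _ hAB
  have hCptA : u ∈ ptype X A := ptype_mono (hsub.trans inter_subset_left) (trim_mem hC)
  have hCptB : u ∈ ptype X B := ptype_mono (hsub.trans inter_subset_right) (trim_mem hC)
  rw [hA.2.2] at hCptA; rw [hB.2.2] at hCptB
  exact ⟨u, ⟨C, hC, hwC⟩, hCptA, hCptB⟩

lemma X_subset_Yext {X : P → Set W} (hX : IsSemiTrim X) (p : P) : X p ⊆ Yext X p :=
  fun x hx => hX.label_sup p x hx

lemma Yext_reg {X : P → Set W} (A : Set W) (p q : P) (hA : IsTrimSet X p A)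
    (h : (A ∩ Yext X q).Nonempty) : p ≤ q := by
  obtain ⟨w, hw1, hw2⟩ := h
  exact hw2.1 ⟨A, hA, hw1⟩

lemma trim_Yext {X : P → Set W} (hX : IsSemiTrim X) {p : P} {A : Set W}
    (h : IsTrimSet X p A) : IsTrimSet (Yext X) p A :=
  ext_trim (X_subset_Yext hX) (fun A p q hA h' => Yext_reg A p q hA h') h

/-- A nested cofinal sequence of trim neighbourhoods of any point. -/
lemma exists_cofinal_seq [FirstCountableTopology W] {X : P → Set W} (hX : IsSemiTrim X) (w : W) :
    ∃ (B : ℕ → Set W) (t : ℕ → P), (∀ n, IsTrimSet X (t n) (B n) ∧ w ∈ B n) ∧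
      (∀ n, B (n + 1) ⊆ B n) ∧ (∀ U ∈ nhds w, ∃ n, B n ⊆ U) := by
  obtain ⟨U, hU⟩ := (nhds w).exists_antitone_basis
  obtain ⟨p0, A0, hA0, hwA0, hA0U⟩ := hX.nhds_base w (U 0) (hU.toHasBasis.mem_of_mem trivial)
  have step : ∀ n (a : Set W × P),
      (IsTrimSet X a.2 a.1 ∧ w ∈ a.1 ∧ a.1 ⊆ U n) →
      ∃ b : Set W × P, (IsTrimSet X b.2 b.1 ∧ w ∈ b.1 ∧ b.1 ⊆ U (n + 1)) ∧ b.1 ⊆ a.1 := by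
    intro n a ⟨ha, hwa, _⟩
    have hmem : a.1 ∩ U (n + 1) ∈ nhds w :=
      Filter.inter_mem (ha.2.1.mem_nhds hwa) (hU.toHasBasis.mem_of_mem trivial)
    obtain ⟨q, C, hC, hwC, hsub⟩ := hX.nhds_base w _ hmem
    exact ⟨(C, q), ⟨hC, hwC, hsub.trans inter_subset_right⟩, hsub.trans inter_subset_left⟩
  obtain ⟨f, -, hQ, hR⟩ := seq_rec
    (fun n (a : Set W × P) => IsTrimSet X a.2 a.1 ∧ w ∈ a.1 ∧ a.1 ⊆ U n)
    (fun _ a b => b.1 ⊆ a.1) (A0, p0) ⟨hA0, hwA0, hA0U⟩ step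
  refine ⟨fun n => (f n).1, fun n => (f n).2, fun n => ⟨(hQ n).1, (hQ n).2.1⟩, hR, ?_⟩
  intro V hV
  obtain ⟨n, -, hn⟩ := hU.toHasBasis.mem_iff.mp hV
  exact ⟨n, (hQ n).2.2.trans hn⟩

/-- Every point gets a label in the completion, assuming the sup condition. -/
lemma exists_lub_Dset [FirstCountableTopology W] {X : P → Set W} (hX : IsSemiTrim X)
    (Hsup : ∀ f : ℕ → P, Monotone f → (∀ n, f n ∈ trimHat X) → ∃ q : P, IsLUB (range f) q)
    (w : W) : ∃ q, IsLUB (Dset X w) q := by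
  obtain ⟨B, t, h1, h2, h3⟩ := exists_cofinal_seq hX w
  have hmono : Monotone t := by
    apply monotone_nat_of_le_succ
    intro n
    have : t (n + 1) ∈ ptype X (B n) := ptype_mono (h2 n) (trim_mem (h1 (n + 1)).1)
    rwa [(h1 n).1.2.2] at this
  obtain ⟨q, hq⟩ := Hsup t hmono (fun n => ⟨B n, (h1 n).1⟩)
  refine ⟨q, ?_, ?_⟩
  · rintro r ⟨A, hA, hwA⟩
    obtain ⟨n, hn⟩ := h3 A (hA.2.1.mem_nhds hwA)
    have : t n ∈ ptype X A := ptype_mono hn (trim_mem (h1 n).1)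
    rw [hA.2.2] at this
    exact this.trans (hq.1 ⟨n, rfl⟩)
  · intro b hb
    exact hq.2 (by rintro r ⟨n, rfl⟩; exact hb ⟨B n, (h1 n).1, (h1 n).2⟩)

lemma trimHat_Yext {X : P → Set W} (hX : IsSemiTrim X) {p : P}
    (h : p ∈ trimHat (Yext X)) : p ∈ trimHat X := by
  obtain ⟨C, hC⟩ := h
  have hp : p ∈ ptype (Yext X) C := trim_mem hC
  obtain ⟨w, hwC, hwY⟩ := hp
  obtain ⟨r, B, hB, hwB, hBC⟩ := hX.nhds_base w C (hC.2.1.mem_nhds hwC)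
  have h1 : r ∈ ptype (Yext X) C :=
    ptype_mono hBC (trim_mem (trim_Yext hX hB))
  rw [hC.2.2] at h1
  have h2 : r ≤ p := hwY.1 ⟨B, hB, hwB⟩
  have : r = p := le_antisymm h2 h1
  exact ⟨B, this ▸ hB⟩

/-- The canonical completion is a complete semi-trim partition regularly extending `X`. -/
lemma Yext_semiTrim [FirstCountableTopology W] {X : P → Set W} (hX : IsSemiTrim X)
    (Hsup : ∀ f : ℕ → P, Monotone f → (∀ n, f n ∈ trimHat X) → ∃ q : P, IsLUB (range f) q) :
    IsSemiTrim (Yext X) ∧ (⋃ p, Yext X p) = univ := by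
  constructor
  · constructor
    · constructor
      · exact fun p => (hX.nonempty p).imp (fun x hx => X_subset_Yext hX p hx)
      · intro p q hpq
        rw [disjoint_left]
        intro w hwp hwq
        exact hpq (hwp.unique hwq)
    · intro w U hU
      obtain ⟨p, A, hA, hwA, hAU⟩ := hX.nhds_base w U hU
      exact ⟨p, A, trim_Yext hX hA, hwA, hAU⟩
    · intro A hAopen p ⟨hpA, hphat⟩
      have hphatX : p ∈ trimHat X := trimHat_Yext hX hphat
      obtain ⟨w, hwA, hwY⟩ := hpA
      obtain ⟨r, B, hB, hwB, hBA⟩ := hX.nhds_base w A (hAopen.mem_nhds hwA)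
      have hrp : r ≤ p := hwY.1 ⟨B, hB, hwB⟩
      have hpB : p ∈ ptype X B := by rw [hB.2.2]; exact hrp
      obtain ⟨B', hB'A, hB'⟩ := hX.trim_dense A hAopen p ⟨ptype_mono hBA hpB, hphatX⟩
      exact ⟨B', hB'A, trim_Yext hX hB'⟩
    · intro p w hw
      constructor
      · rintro r ⟨A, hA, hwA⟩
        have : p ∈ ptype (Yext X) A := ⟨w, hwA, hw⟩
        rw [hA.2.2] at this
        exact this
      · intro b hb
        exact hw.2 (fun r hr => hb ⟨hr.choose, trim_Yext hX hr.choose_spec.1, hr.choose_spec.2⟩)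
    · intro p w hyp
      show IsLUB (Dset X w) p
      obtain ⟨A, hA, hwA, -⟩ := hyp univ Filter.univ_mem
      constructor
      · rintro r ⟨B, hB, hwB⟩
        obtain ⟨A', hA', hwA', hA'B⟩ := hyp B (hB.2.1.mem_nhds hwB)
        have : p ∈ ptype (Yext X) B := ptype_mono hA'B (trim_mem hA')
        rw [(trim_Yext hX hB).2.2] at this
        exact this
      · intro b hb
        obtain ⟨r, B, hB, hwB, hBA⟩ := hX.nhds_base w A (hA.2.1.mem_nhds hwA)
        have h1 : r ∈ ptype (Yext X) A := ptype_mono hBA (trim_mem (trim_Yext hX hB))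
        rw [hA.2.2] at h1
        exact h1.trans (hb ⟨B, hB, hwB⟩)
  · apply eq_univ_of_forall
    intro w
    obtain ⟨q, hq⟩ := exists_lub_Dset hX Hsup w
    exact mem_iUnion.mpr ⟨q, hq⟩

/-- ACC implies every monotone sequence has a supremum. -/
lemma acc_to_sup (hacc : ∀ f : ℕ → P, ¬ StrictMono f) (f : ℕ → P) (hf : Monotone f) :
    ∃ q : P, IsLUB (range f) q := by
  by_cases h : ∃ n : ℕ, ∀ m, n ≤ m → f m ≤ f n
  · obtain ⟨n, hn⟩ := h
    refine ⟨f n, ?_, fun b hb => hb ⟨n, rfl⟩⟩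
    rintro r ⟨m, rfl⟩
    rcases le_or_gt m n with h' | h'
    · exact hf h'
    · exact hn m h'.le
  · push_neg at h
    obtain ⟨g, -, -, hg⟩ := seq_rec (fun _ (_ : ℕ) => True) (fun _ a b => f a < f b) 0 trivial
      (by
        intro n a _
        obtain ⟨m, hm1, hm2⟩ := h a
        exact ⟨m, trivial, lt_of_le_of_ne (hf hm1) (fun he => hm2 he.ge)⟩)
    exact absurd (strictMono_nat_of_lt_succ hg) (hacc _)

/-- Under ACC, every point of the completion is clean. -/
lemma Yext_trimpt {X : P → Set W} (hX : IsSemiTrim X)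
    (hacc : ∀ f : ℕ → P, ¬ StrictMono f) :
    ∀ p, ∀ w ∈ Yext X p, ∃ A, IsTrimSet (Yext X) p A ∧ w ∈ A := by
  intro p w hw
  have hmem : p ∈ Dset X w := by
    by_contra hp
    have step : ∀ r ∈ Dset X w, ∃ s ∈ Dset X w, r < s := by
      intro r hr
      have hrp : r ≠ p := fun h => hp (h ▸ hr)
      have hne : ¬ ∀ s ∈ Dset X w, s ≤ r := fun h => hrp (le_antisymm (hw.1 hr) (hw.2 h))
      push_neg at hne
      obtain ⟨s, hs, hsr⟩ := hne
      obtain ⟨u, hu, hru, hsu⟩ := Dset_directed hX w hr hs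
      exact ⟨u, hu, lt_of_le_of_ne hru (fun h => hsr (h ▸ hsu))⟩
    obtain ⟨r0, hr0⟩ := Dset_nonempty hX w
    obtain ⟨g, -, -, hg⟩ := seq_rec (fun _ r => r ∈ Dset X w) (fun _ a b => a < b) r0 hr0
      (fun n a ha => by obtain ⟨s, h1, h2⟩ := step a ha; exact ⟨s, h1, h2⟩)
    exact absurd (strictMono_nat_of_lt_succ hg) (hacc g)
  obtain ⟨A, hA, hwA⟩ := hmem
  exact ⟨A, trim_Yext hX hA, hwA⟩


/-- Shrinking sequence of trim sets with labels `f n`, converging to a point. -/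
lemma shrink_seq [LocallyCompactSpace W] [T2Space W] [SecondCountableTopology W]
    {Z : P → Set W} (hZ : IsSemiTrim Z) (f : ℕ → P) (hf : Monotone f)
    (hhat : ∀ n, f n ∈ trimHat Z) :
    ∃ (C : ℕ → Set W) (x : W), (∀ n, IsTrimSet Z (f n) (C n)) ∧ (∀ n, x ∈ C n) ∧
      (∀ U ∈ nhds x, ∃ n, C n ⊆ U) := by
  letI : MetricSpace W := TopologicalSpace.metrizableSpaceMetric W
  obtain ⟨A0, hA0⟩ := hhat 0
  have step : ∀ n (A : Set W), IsTrimSet Z (f n) A →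
      ∃ B, IsTrimSet Z (f (n + 1)) B ∧ (B ⊆ A ∧ ∃ y, B ⊆ Metric.ball y (1 / (n + 1))) := by
    intro n A hA
    have h1 : f (n + 1) ∈ ptype Z A := by rw [hA.2.2]; exact hf (Nat.le_succ n)
    obtain ⟨y, hy1, hy2⟩ := h1
    have hOopen : IsOpen (A ∩ Metric.ball y (1 / (n + 1))) := hA.2.1.inter Metric.isOpen_ball
    have hpos : (0 : ℝ) < 1 / (n + 1) := by positivity
    have hmem : f (n + 1) ∈ ptype Z (A ∩ Metric.ball y (1 / (n + 1))) :=
      ⟨y, ⟨hy1, Metric.mem_ball_self hpos⟩, hy2⟩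
    obtain ⟨B, hBsub, hB⟩ := hZ.trim_dense _ hOopen (f (n + 1)) ⟨hmem, hhat (n + 1)⟩
    exact ⟨B, hB, hBsub.trans inter_subset_left, y, hBsub.trans inter_subset_right⟩
  obtain ⟨C, -, hC, hR⟩ := seq_rec (fun n C => IsTrimSet Z (f n) C)
    (fun n A B => B ⊆ A ∧ ∃ y, B ⊆ Metric.ball y (1 / (n + 1))) A0 hA0 step
  have hne : ∀ n, (C n).Nonempty := fun n => ((trim_mem (hC n)).mono inter_subset_left :)
  have hx : (⋂ n, C n).Nonempty :=
    IsCompact.nonempty_iInter_of_sequence_nonempty_isCompact_isClosed C (fun n => (hR n).1)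
      hne (hC 0).1 (fun n => (hC n).1.isClosed)
  obtain ⟨x, hxm⟩ := hx
  have hxm' : ∀ n, x ∈ C n := fun n => mem_iInter.mp hxm n
  refine ⟨C, x, hC, hxm', ?_⟩
  intro U hU
  obtain ⟨ε, hε, hball⟩ := Metric.mem_nhds_iff.mp hU
  obtain ⟨n, hn⟩ := exists_nat_one_div_lt (half_pos hε)
  obtain ⟨y, hy⟩ := (hR n).2
  refine ⟨n + 1, fun z hz => hball ?_⟩
  have h1 : dist z y < 1 / (n + 1) := Metric.mem_ball.mp (hy hz)
  have h2 : dist x y < 1 / (n + 1) := Metric.mem_ball.mp (hy (hxm' (n + 1)))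
  have : dist z x < ε := by
    calc dist z x ≤ dist z y + dist y x := dist_triangle z y x
    _ = dist z y + dist x y := by rw [dist_comm y x]
    _ < ε / 2 + ε / 2 := add_lt_add (h1.trans hn) (h2.trans hn)
    _ = ε := add_halves ε
  exact Metric.mem_ball.mpr this

lemma forward_semi [LocallyCompactSpace W] [T2Space W] [SecondCountableTopology W]
    {X Y : P → Set W} (hX : IsSemiTrim X) (hY : IsSemiTrim Y)
    (hcov : (⋃ p, Y p) = univ) (hXY : ∀ p, X p ⊆ Y p)
    (hreg : ∀ (A : Set W) (p q : P), IsTrimSet X p A → (A ∩ Y q).Nonempty → p ≤ q)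
    (f : ℕ → P) (hf : Monotone f) (hhat : ∀ n, f n ∈ trimHat X) :
    ∃ q : P, IsLUB (range f) q := by
  obtain ⟨C, x, hC, hxC, hbase⟩ := shrink_seq hX f hf hhat
  have hxU : x ∈ ⋃ p, Y p := hcov ▸ mem_univ x
  obtain ⟨q, hq⟩ := mem_iUnion.mp hxU
  have hlub := hY.label_sup q x hq
  refine ⟨q, ?_, ?_⟩
  · rintro r ⟨n, rfl⟩
    exact hreg (C n) (f n) q (hC n) ⟨x, hxC n, hq⟩
  · intro b hb
    refine hlub.2 ?_
    rintro r ⟨A, hA, hxA⟩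
    obtain ⟨n, hn⟩ := hbase A (hA.2.1.mem_nhds hxA)
    have h1 : f n ∈ ptype Y A := ptype_mono hn (trim_mem (ext_trim hXY hreg (hC n)))
    rw [hA.2.2] at h1
    exact h1.trans (hb ⟨n, rfl⟩)

lemma forward_trim [LocallyCompactSpace W] [T2Space W] [SecondCountableTopology W]
    {X Y : P → Set W} (hX : IsSemiTrim X) (hY : IsSemiTrim Y)
    (hcov : (⋃ p, Y p) = univ)
    (htr : ∀ p, ∀ x ∈ Y p, ∃ A, IsTrimSet Y p A ∧ x ∈ A)
    (hXY : ∀ p, X p ⊆ Y p)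
    (f : ℕ → P) (hf : StrictMono f) : False := by
  have hhatY : ∀ n, f n ∈ trimHat Y := by
    intro n
    obtain ⟨z, hz⟩ := hX.nonempty (f n)
    obtain ⟨A, hA, -⟩ := htr (f n) z (hXY _ hz)
    exact ⟨A, hA⟩
  obtain ⟨C, x, hC, hxC, hbase⟩ := shrink_seq hY f hf.monotone hhatY
  have hxU : x ∈ ⋃ p, Y p := hcov ▸ mem_univ x
  obtain ⟨q, hq⟩ := mem_iUnion.mp hxU
  have hub : ∀ n, f n ≤ q := by
    intro n
    have : q ∈ ptype Y (C n) := ⟨x, hxC n, hq⟩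
    rwa [(hC n).2.2] at this
  obtain ⟨A, hA, hxA⟩ := htr q x hq
  obtain ⟨n, hn⟩ := hbase A (hA.2.1.mem_nhds hxA)
  have h1 : f n ∈ ptype Y A := ptype_mono hn (trim_mem (hC n))
  rw [hA.2.2] at h1
  exact absurd ((hf (Nat.lt_succ_self n)).trans_le ((hub (n + 1)).trans h1)) (lt_irrefl _)

/-- Let `𝒳` be a semi-trim `P`-partition of an ω-Stone space `W`.
(A) `𝒳` can be regularly extended to a complete semi-trim `P`-partition of `W` iff every
ascending sequence of elements of `P̂` has a supremum in `P`; (B) `𝒳` can be regularly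
extended to a complete trim `P`-partition of `W` iff `P` satisfies the ACC. -/
theorem completion_iff
    [LocallyCompactSpace W] [TotallyDisconnectedSpace W] [T2Space W]
    [SecondCountableTopology W]
    (X : P → Set W) (hX : IsSemiTrim X) :
    ((∃ Y : P → Set W, IsSemiTrim Y ∧ (⋃ p, Y p) = univ ∧ (∀ p, X p ⊆ Y p) ∧
        (∀ (A : Set W) (p q : P),
          IsTrimSet X p A → (A ∩ Y q).Nonempty → p ≤ q)) ↔
      (∀ f : ℕ → P, Monotone f → (∀ n, f n ∈ trimHat X) → ∃ q : P, IsLUB (range f) q)) ∧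
    ((∃ Y : P → Set W, IsSemiTrim Y ∧ (⋃ p, Y p) = univ ∧
        (∀ p, ∀ x ∈ Y p, ∃ A, IsTrimSet Y p A ∧ x ∈ A) ∧ (∀ p, X p ⊆ Y p) ∧
        (∀ (A : Set W) (p q : P),
          IsTrimSet X p A → (A ∩ Y q).Nonempty → p ≤ q)) ↔
      (∀ f : ℕ → P, ¬ StrictMono f)) := by
  constructor
  · constructor
    · rintro ⟨Y, hY, hcov, hXY, hreg⟩ f hf hhat
      exact forward_semi hX hY hcov hXY hreg f hf hhat
    · intro Hsup
      obtain ⟨hsemi, hcov⟩ := Yext_semiTrim hX Hsup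
      exact ⟨Yext X, hsemi, hcov, X_subset_Yext hX, fun A p q hA h => Yext_reg A p q hA h⟩
  · constructor
    · rintro ⟨Y, hY, hcov, htr, hXY, hreg⟩ f hf
      exact forward_trim hX hY hcov htr hXY f hf
    · intro hacc
      have Hsup : ∀ f : ℕ → P, Monotone f → (∀ n, f n ∈ trimHat X) →
          ∃ q : P, IsLUB (range f) q := fun f hf _ => acc_to_sup hacc f hf
      obtain ⟨hsemi, hcov⟩ := Yext_semiTrim hX Hsup
      exact ⟨Yext X, hsemi, hcov, Yext_trimpt hX hacc, X_subset_Yext hX,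
        fun A p q hA h => Yext_reg A p q hA h⟩
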